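/- Let $\nu:(0,\infty)\to(0,\infty)$ be nonincreasing and absolutely continuous with $\nu(r) = -\int_r^\infty \nu'(\rho)\,d\rho$, such that $-\nu'(r)/r$ is nonincreasing, and assume $\nu(r)\le a_1\nu(r+1)$ for $r\ge 1$ and $\nu(r)\le a_1\nu(2r)$ for $0<r\le 1$, where $a_1\ge 1$. Then for all $r>0$, $|\nu'(r)|/\nu(r) \le 3(a_1-1)/(r\wedge 1)$. -/

import Mathlib

open MeasureTheory Set

private lemma levy_intA (ν ν' : ℝ → ℝ)
    (hpos : ∀ r > (0:ℝ), 0 < ν r)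
    (habs : ∀ r > (0:ℝ), ν r = -∫ ρ in Set.Ioi r, ν' ρ) :
    ∀ r > (0:ℝ), IntegrableOn ν' (Set.Ioi r) := by
  intro r hr
  by_contra h
  have h0 := habs r hr
  rw [integral_undef h] at h0
  simp at h0
  exact (hpos r hr).ne' h0

private lemma levy_nonpos (ν ν' : ℝ → ℝ)
    (hpos : ∀ r > (0:ℝ), 0 < ν r)
    (habs : ∀ r > (0:ℝ), ν r = -∫ ρ in Set.Ioi r, ν' ρ)
    (hratio : ∀ u v : ℝ, 0 < u → u ≤ v → -ν' v / v ≤ -ν' u / u) :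
    ∀ r > (0:ℝ), ν' r ≤ 0 := by
  intro r hr
  by_contra h
  push_neg at h
  have hI : IntegrableOn ν' (Set.Ioi r) := levy_intA ν ν' hpos habs r hr
  have hconst : IntegrableOn (fun _ : ℝ => ν' r) (Set.Ioi r) := by
    apply Integrable.mono hI aestronglyMeasurable_const
    filter_upwards [ae_restrict_mem measurableSet_Ioi] with ρ hρ
    have hρ' : r < ρ := hρ
    have hρpos : 0 < ρ := lt_trans hr hρ'
    have h1 : -ν' ρ / ρ ≤ -ν' r / r := hratio r ρ hr hρ'.le
    have h2 : (-ν' ρ) * r ≤ (-ν' r) * ρ := by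
      rw [div_le_div_iff₀ hρpos hr] at h1; linarith
    have h3 : ν' r ≤ ν' ρ := by nlinarith
    rw [Real.norm_eq_abs, Real.norm_eq_abs, abs_of_pos h, abs_of_pos (lt_of_lt_of_le h h3)]
    exact h3
  rw [integrableOn_const_iff] at hconst
  rcases hconst with h0 | hfin
  · exact h.ne' (enorm_eq_zero.mp h0)
  · rw [Real.volume_Ioi] at hfin
    exact (lt_irrefl _ hfin).elim

private lemma levy_key (ν ν' : ℝ → ℝ)
    (hpos : ∀ r > (0:ℝ), 0 < ν r)
    (habs : ∀ r > (0:ℝ), ν r = -∫ ρ in Set.Ioi r, ν' ρ)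
    (hratio : ∀ u v : ℝ, 0 < u → u ≤ v → -ν' v / v ≤ -ν' u / u) :
    ∀ u v : ℝ, 0 < u → u ≤ v → (-ν' v) * (v ^ 2 - u ^ 2) ≤ 2 * v * (ν u - ν v) := by
  intro u v hu huv
  have hv : 0 < v := lt_of_lt_of_le hu huv
  have hIu : IntegrableOn ν' (Set.Ioi u) := levy_intA ν ν' hpos habs u hu
  have hIv : IntegrableOn ν' (Set.Ioi v) := hIu.mono_set (Set.Ioi_subset_Ioi huv)
  have hIuv : IntegrableOn ν' (Set.Ioc u v) := hIu.mono_set Set.Ioc_subset_Ioi_self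
  have hsplit : (∫ ρ in Set.Ioi u, ν' ρ) =
      (∫ ρ in Set.Ioc u v, ν' ρ) + ∫ ρ in Set.Ioi v, ν' ρ := by
    rw [← setIntegral_union (Set.Ioc_disjoint_Ioi le_rfl) measurableSet_Ioi hIuv hIv,
      Set.Ioc_union_Ioi_eq_Ioi huv]
  have hdiff : ν u - ν v = ∫ ρ in Set.Ioc u v, (-ν' ρ) := by
    rw [habs u hu, habs v hv, hsplit, integral_neg]
    ring
  have hlin : IntegrableOn (fun ρ : ℝ => (-ν' v) / v * ρ) (Set.Ioc u v) :=
    (continuous_const.mul continuous_id).integrableOn_Ioc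
  have hmono : (∫ ρ in Set.Ioc u v, (-ν' v) / v * ρ) ≤ ∫ ρ in Set.Ioc u v, (-ν' ρ) := by
    apply setIntegral_mono_on hlin hIuv.neg measurableSet_Ioc
    intro ρ hρ
    have hρpos : 0 < ρ := lt_trans hu hρ.1
    have h1 : -ν' v / v ≤ -ν' ρ / ρ := hratio ρ v hρpos hρ.2
    have h2 : (-ν' v / v) * ρ ≤ (-ν' ρ / ρ) * ρ := by
      exact mul_le_mul_of_nonneg_right h1 hρpos.le
    rwa [div_mul_cancel₀ _ hρpos.ne'] at h2
  have hcomp : (∫ ρ in Set.Ioc u v, (-ν' v) / v * ρ) = (-ν' v) / v * ((v ^ 2 - u ^ 2) / 2) := by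
    rw [MeasureTheory.integral_const_mul, ← intervalIntegral.integral_of_le huv, integral_id]
  have hfinal : (-ν' v) / v * ((v ^ 2 - u ^ 2) / 2) ≤ ν u - ν v := by
    rw [← hcomp, hdiff]; exact hmono
  have hmul := mul_le_mul_of_nonneg_left hfinal (by positivity : (0:ℝ) ≤ 2 * v)
  calc (-ν' v) * (v ^ 2 - u ^ 2) = 2 * v * ((-ν' v) / v * ((v ^ 2 - u ^ 2) / 2)) := by
        field_simp
    _ ≤ 2 * v * (ν u - ν v) := hmul

theorem levy_density_log_derivative_bound
    (ν ν' : ℝ → ℝ) (a₁ : ℝ) (ha₁ : 1 ≤ a₁)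
    (hpos : ∀ r > (0:ℝ), 0 < ν r)
    (hanti : ∀ u v : ℝ, 0 < u → u ≤ v → ν v ≤ ν u)
    (habs : ∀ r > (0:ℝ), ν r = -∫ ρ in Set.Ioi r, ν' ρ)
    (hratio : ∀ u v : ℝ, 0 < u → u ≤ v → -ν' v / v ≤ -ν' u / u)
    (hdbl1 : ∀ r : ℝ, 1 ≤ r → ν r ≤ a₁ * ν (r + 1))
    (hdbl2 : ∀ r : ℝ, 0 < r → r ≤ 1 → ν r ≤ a₁ * ν (2 * r)) :
    ∀ r > (0:ℝ), |ν' r| / ν r ≤ 3 * (a₁ - 1) / (min r 1) := by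
  intro r hr
  have hνr : 0 < ν r := hpos r hr
  have hminpos : 0 < min r 1 := lt_min hr one_pos
  have hX : ν' r ≤ 0 := levy_nonpos ν ν' hpos habs hratio r hr
  have hc : (0:ℝ) ≤ a₁ - 1 := by linarith
  rw [abs_of_nonpos hX, div_le_div_iff₀ hνr hminpos]
  rcases le_or_gt r 2 with hr2 | hr2
  · -- r ≤ 2 : use u = r/2, v = r
    have hkey := levy_key ν ν' hpos habs hratio (r / 2) r (by linarith) (by linarith)
    have hd := hdbl2 (r / 2) (by linarith) (by linarith)
    rw [show (2:ℝ) * (r / 2) = r by ring] at hd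
    have hmin_le : min r 1 ≤ r := min_le_left _ _
    have hXnn : 0 ≤ -ν' r := by linarith
    -- from hkey: (-ν' r) * (3/4 r²) ≤ 2r (ν(r/2) - ν r) ≤ 2r (a₁-1) ν r
    have h1 : (-ν' r) * ((3:ℝ) / 4 * r ^ 2) ≤ 2 * r * ((a₁ - 1) * ν r) := by
      have : ν (r / 2) - ν r ≤ (a₁ - 1) * ν r := by nlinarith
      nlinarith
    -- hence (-ν' r) * r ≤ (8/3) (a₁-1) ν r ≤ 3 (a₁-1) ν r
    have h2 : (-ν' r) * r ≤ 3 * (a₁ - 1) * ν r := by nlinarith [mul_nonneg (mul_nonneg hc hνr.le) hr.le]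
    nlinarith [mul_le_mul_of_nonneg_left hmin_le hXnn]
  · -- r > 2 : use u = r - 1, v = r
    have hkey := levy_key ν ν' hpos habs hratio (r - 1) r (by linarith) (by linarith)
    have hd := hdbl1 (r - 1) (by linarith)
    rw [show r - 1 + 1 = r by ring] at hd
    have hmin : min r 1 = 1 := min_eq_right (by linarith)
    rw [hmin]
    have hXnn : 0 ≤ -ν' r := by linarith
    have h1 : (-ν' r) * (2 * r - 1) ≤ 2 * r * ((a₁ - 1) * ν r) := by nlinarith
    nlinarith [mul_nonneg (mul_nonneg hc hνr.le) hr.le]
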